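/- Let w be an infinite word such that for every i ≥ 1 the Zimin type of the prefix w[1..i] equals ⌊log₂(i+1)⌋ (the maximal possible value, i.e., the Zimin type sequence of w equals 1² 2⁴ 3⁸ ⋯ n^{2^n} ⋯). Then w is unary: all letters of w are equal. -/

import Mathlib

open List Filter

/-- The Zimin pattern `Z_k` as a word over variables `0, 1, ..., k-1`
(`Z_0` is empty, `Z_{k+1} = Z_k · x_{k+1} · Z_k`). -/
def ziminWord : ℕ → List ℕ
  | 0 => []
  | k + 1 => ziminWord k ++ k :: ziminWord k

/-- `w` is the image of the Zimin pattern `Z_k` under a non-erasing morphism. -/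
def IsZiminImage {α : Type*} (k : ℕ) (w : List α) : Prop :=
  ∃ h : ℕ → List α, (∀ i, h i ≠ []) ∧ w = (ziminWord k).flatMap h

/-- The Zimin type of `w`: the maximum `k` such that `w` is an image of `Z_k`
under a non-erasing morphism (0 for the empty word). -/
noncomputable def ziminType {α : Type*} (w : List α) : ℕ :=
  sSup {k | IsZiminImage k w}

/-- The Zimin pattern `Z_k` embeds in `w`: some factor of `w` is an image of `Z_k`. -/
def ziminEmbeds {α : Type*} (k : ℕ) (w : List α) : Prop :=
  ∃ u : List α, u <:+: w ∧ IsZiminImage k u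

/-- Length of the longest border (proper prefix that is also a proper suffix) of `w`. -/
noncomputable def bordLen {α : Type*} (w : List α) : ℕ :=
  sSup {j | w.take j <:+ w ∧ j < w.length}

/-- Length of the longest short border (border of length `< |w|/2`) of `w`. -/
noncomputable def shortBordLen {α : Type*} (w : List α) : ℕ :=
  sSup {j | w.take j <:+ w ∧ 2 * j < w.length}

/-- The longest border of `w`. -/
noncomputable def bord {α : Type*} (w : List α) : List α := w.take (bordLen w)

/-- The longest short border of `w`. -/
noncomputable def shortBord {α : Type*} (w : List α) : List α := w.take (shortBordLen w)

/-- The Fibonacci words over `Bool` (`a = false`, `b = true`), with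
`fibWord 0 = F_0 = a`, `fibWord 1 = F_1 = F_0 F_{-1} = ab`, `F_{n} = F_{n-1} F_{n-2}`. -/
def fibWord : ℕ → List Bool
  | 0 => [false]
  | 1 => [false, true]
  | n + 2 => fibWord (n + 1) ++ fibWord n

/-- The Fibonacci numbers `Φ_n = |F_n|` (`Φ_0 = 1, Φ_1 = 2, Φ_2 = 3, ...`). -/
def Phi (n : ℕ) : ℕ := (fibWord n).length

/-- The infinite Fibonacci word `F_∞` (0-indexed letters). -/
def fibInf (i : ℕ) : Bool := (fibWord (i + 2)).getD i false

/-- The prefix `F_∞[1..n]` of the infinite Fibonacci word. -/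
def fibPrefix (n : ℕ) : List Bool := (List.range n).map fibInf


lemma ziminWord_length (n : ℕ) : (ziminWord n).length = 2^n - 1 := by
  induction n with
  | zero => simp [ziminWord]
  | succ k ih =>
    have : 1 ≤ 2^k := Nat.one_le_two_pow
    simp [ziminWord, ih, pow_succ]
    omega

lemma flatMap_length_ge {α : Type*} (h : ℕ → List α) (hne : ∀ i, h i ≠ []) (l : List ℕ) :
    l.length ≤ (l.flatMap h).length := by
  induction l with
  | nil => simp
  | cons a l ih =>
    simp only [List.flatMap_cons, List.length_append, List.length_cons]
    have := List.length_pos_iff.mpr (hne a)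
    omega

lemma isZiminImage_of_ziminType {α : Type*} {w : List α} {m : ℕ} (hm : 0 < m)
    (h : ziminType w = m) : IsZiminImage m w := by
  have hbdd : BddAbove {k | IsZiminImage k w} := by
    refine ⟨w.length, fun k hk => ?_⟩
    obtain ⟨f, hf, hw⟩ := hk
    have h1 := flatMap_length_ge f hf (ziminWord k)
    rw [ziminWord_length, ← hw] at h1
    have h2 : k < 2^k := Nat.lt_two_pow_self (n := k)
    omega
  have hne : {k | IsZiminImage k w}.Nonempty := by
    by_contra hc
    rw [Set.not_nonempty_iff_eq_empty] at hc
    rw [ziminType, hc] at h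
    simp at h
    omega
  have := Nat.sSup_mem hne hbdd
  rwa [← ziminType, h] at this

lemma copy_fact {α : Type*} (w : ℕ → α) (m L : ℕ)
    (hL1 : 2^(m+1) - 1 ≤ L) (hL2 : L ≤ 2^(m+1))
    (hz : IsZiminImage (m+1) ((List.range L).map w)) :
    ∀ t < 2^m - 1, w (L - (2^m - 1) + t) = w t := by
  obtain ⟨h, hne, hw⟩ := hz
  rw [show ziminWord (m+1) = ziminWord m ++ m :: ziminWord m from rfl,
    List.flatMap_append, List.flatMap_cons] at hw
  set A := (ziminWord m).flatMap h with hA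
  have hAlen : 2^m - 1 ≤ A.length := by
    have := flatMap_length_ge h hne (ziminWord m)
    rwa [ziminWord_length] at this
  have hmidlen : 1 ≤ (h m).length := List.length_pos_iff.mpr (hne m)
  have hPlen : L = A.length + ((h m).length + A.length) := by
    have := congrArg List.length hw
    simpa using this
  have hpow : 2^(m+1) = 2 * 2^m := by ring
  have h1 : 1 ≤ 2^m := Nat.one_le_two_pow
  have hAeq : A.length = 2^m - 1 := by omega
  intro t ht
  have htA : t < A.length := by omega
  have htL : t < L := by omega
  have hdL : L - (2^m - 1) + t < L := by omega
  have e1 : ((List.range L).map w)[t]? = some (w t) := by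
    simp [List.getElem?_map, List.getElem?_range, htL]
  have e2 : ((List.range L).map w)[L - (2^m - 1) + t]? = some (w (L - (2^m - 1) + t)) := by
    simp [List.getElem?_map, List.getElem?_range, hdL]
  have e3 : ((List.range L).map w)[t]? = A[t]? := by
    rw [hw, List.getElem?_append_left htA]
  have e4 : ((List.range L).map w)[L - (2^m - 1) + t]? = A[t]? := by
    have hd : L - (2^m - 1) + t = A.length + ((h m).length + t) := by omega
    rw [hw, hd, List.getElem?_append_right (by omega), List.getElem?_append_right (by omega)]
    congr 1
    omega
  rw [e1] at e3
  exact Option.some_inj.mp (e2.symm.trans (e4.trans e3.symm))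


/-- Lemma 7: any infinite word whose Zimin type sequence is maximal, i.e. the
prefix of each length `i ≥ 1` has Zimin type `⌊log₂(i+1)⌋`, is unary. -/
theorem unary_of_max_ziminType_seq {α : Type*} (w : ℕ → α)
    (h : ∀ i, 1 ≤ i → ziminType ((List.range i).map w) = Nat.log 2 (i + 1)) :
    ∀ i j, w i = w j := by
  have key : ∀ m L, 2^(m+1) - 1 ≤ L → L ≤ 2^(m+1) →
      ∀ t < 2^m - 1, w (L - (2^m - 1) + t) = w t := by
    intro m L hL1 hL2
    have hp : 2 ≤ 2^(m+1) := by
      calc 2 = 2^1 := rfl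
      _ ≤ 2^(m+1) := Nat.pow_le_pow_right (by norm_num) (by omega)
    have hp2 : 2^(m+2) = 2 * 2^(m+1) := by ring
    have hz := h L (by omega)
    have hlog : Nat.log 2 (L + 1) = m + 1 := by
      apply Nat.log_eq_of_pow_le_of_lt_pow <;> omega
    rw [hlog] at hz
    exact copy_fact w m L hL1 hL2 (isZiminImage_of_ziminType (Nat.succ_pos m) hz)
  have main : ∀ n, ∀ i < 2^n - 1, w i = w 0 := by
    intro n
    induction n with
    | zero => intro i hi; omega
    | succ n ih =>
      have e1 : (1:ℕ) ≤ 2^n := Nat.one_le_two_pow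
      have e2 : 2^(n+1) = 2 * 2^n := by ring
      have e3 : 2^(n+2) = 4 * 2^n := by ring
      intro i hi
      rcases lt_trichotomy i (2^n - 1) with h1 | h1 | h1
      · exact ih i h1
      · rcases Nat.eq_zero_or_pos n with hn | hn
        · subst hn; simp at h1; rw [h1]
        · have hpn : 2 ≤ 2^n := by
            calc 2 = 2^1 := rfl
            _ ≤ 2^n := Nat.pow_le_pow_right (by norm_num) hn
          have k1 := key (n+1) (2^(n+2) - 1) (by omega) (by omega) (2^n - 1) (by omega)
          have k2 := key (n+1) (2^(n+2)) (by omega) (by omega) (2^n - 2) (by omega)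
          have a1 : 2^(n+2) - 1 - (2^(n+1) - 1) + (2^n - 1) = 2^(n+2) - (2^(n+1) - 1) + (2^n - 2) := by
            omega
          rw [a1, k2] at k1
          rw [h1, ← k1]
          exact ih (2^n - 2) (by omega)
      · have k1 := key n (2^(n+1) - 1) (by omega) (by omega) (i - 2^n) (by omega)
        have a1 : 2^(n+1) - 1 - (2^n - 1) + (i - 2^n) = i := by omega
        rw [a1] at k1
        rw [k1]
        exact ih (i - 2^n) (by omega)
  intro i j
  have hb : ∀ i : ℕ, w i = w 0 := by
    intro i
    have : i < 2^(i+1) - 1 := by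
      have := Nat.lt_two_pow_self (n := i+1)
      omega
    exact main (i+1) i this
  rw [hb i, hb j]
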